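/- Let G, H be graphs equipped with a unary predicate I, and suppose Duplicator has a winning strategy in the k-round EF game on (G, I) and (H, I). Let G_I, H_I be obtained by attaching exactly one new leaf to each vertex satisfying I. Then Duplicator has a winning strategy in the k-round EF game on G_I and H_I. -/

import Mathlib

/-- A list of pairs of chosen vertices is a partial isomorphism between the graphs
`G` and `H` equipped with unary predicates `IG` and `IH`. -/
def EFPartialIsoI {V W : Type*} (G : SimpleGraph V) (IG : V → Prop)
    (H : SimpleGraph W) (IH : W → Prop) (l : List (V × W)) : Prop :=
  (∀ p ∈ l, (IG (p : V × W).1 ↔ IH p.2)) ∧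
  ∀ p ∈ l, ∀ q ∈ l,
    ((p : V × W).1 = (q : V × W).1 ↔ p.2 = q.2) ∧ (G.Adj p.1 q.1 ↔ H.Adj p.2 q.2)

/-- Duplicator has a winning strategy in the `k`-round Ehrenfeucht–Fraïssé game on
the graphs `G` and `H` equipped with unary predicates `IG` and `IH`. -/
def EFDupWinsI {V W : Type*} (G : SimpleGraph V) (IG : V → Prop)
    (H : SimpleGraph W) (IH : W → Prop) : ℕ → List (V × W) → Prop
  | 0, l => EFPartialIsoI G IG H IH l
  | (k + 1), l =>
      (∀ a : V, ∃ b : W, EFDupWinsI G IG H IH k ((a, b) :: l)) ∧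
      (∀ b : W, ∃ a : V, EFDupWinsI G IG H IH k ((a, b) :: l))

/-- Duplicator has a winning strategy in the `k`-round EF game on two plain graphs. -/
def EFDupWins {V W : Type*} (G : SimpleGraph V) (H : SimpleGraph W) :
    ℕ → List (V × W) → Prop :=
  EFDupWinsI G (fun _ => False) H (fun _ => False)

/-- The graph obtained from `G` by attaching exactly one new leaf to each vertex
satisfying the unary predicate `I`. -/
def attachLeaves {V : Type*} (G : SimpleGraph V) (I : V → Prop) :
    SimpleGraph (V ⊕ {v : V // I v}) :=
  SimpleGraph.fromRel (fun a b =>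
    match a, b with
    | Sum.inl u, Sum.inl v => G.Adj u v
    | Sum.inl u, Sum.inr v => u = v.1
    | Sum.inr _, _ => False)

open Sum

/-- Base vertex of a vertex of the attached-leaves graph. -/
def bV {V : Type*} (I : V → Prop) : V ⊕ {v : V // I v} → V := Sum.elim id Subtype.val

lemma EFDupWinsI.iso {V W : Type*} {G : SimpleGraph V} {IG : V → Prop}
    {H : SimpleGraph W} {IH : W → Prop} :
    ∀ {k : ℕ} {l : List (V × W)}, EFDupWinsI G IG H IH k l → EFPartialIsoI G IG H IH l := by
  intro k
  induction k with
  | zero => intro l h; exact h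
  | succ k ih =>
    intro l h
    by_cases hV : Nonempty V
    · obtain ⟨a⟩ := hV
      obtain ⟨b, hb⟩ := h.1 a
      have h' := ih hb
      exact ⟨fun p hp => h'.1 p (List.mem_cons_of_mem _ hp),
        fun p hp q hq => h'.2 p (List.mem_cons_of_mem _ hp) q (List.mem_cons_of_mem _ hq)⟩
    · exact ⟨fun p _ => absurd ⟨p.1⟩ hV, fun p _ => absurd ⟨p.1⟩ hV⟩

lemma attach_adj_inl_inl {V : Type*} {G : SimpleGraph V} {I : V → Prop} {u v : V} :
    (attachLeaves G I).Adj (inl u) (inl v) ↔ G.Adj u v := by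
  simp only [attachLeaves, SimpleGraph.fromRel_adj, ne_eq, inl.injEq]
  constructor
  · rintro ⟨hne, h | h⟩
    · exact h
    · exact h.symm
  · intro h; exact ⟨G.ne_of_adj h, Or.inl h⟩

lemma attach_adj_inl_inr {V : Type*} {G : SimpleGraph V} {I : V → Prop} {u : V}
    {v : {v : V // I v}} :
    (attachLeaves G I).Adj (inl u) (inr v) ↔ u = v.1 := by
  simp [attachLeaves, SimpleGraph.fromRel_adj]

lemma attach_adj_inr_inl {V : Type*} {G : SimpleGraph V} {I : V → Prop} {u : V}
    {v : {v : V // I v}} :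
    (attachLeaves G I).Adj (inr v) (inl u) ↔ v.1 = u := by
  rw [(attachLeaves G I).adj_comm, attach_adj_inl_inr, eq_comm]

lemma attach_adj_inr_inr {V : Type*} {G : SimpleGraph V} {I : V → Prop}
    {v w : {v : V // I v}} :
    (attachLeaves G I).Adj (inr v) (inr w) ↔ False := by
  simp [attachLeaves, SimpleGraph.fromRel_adj]

lemma kindEq {V W : Type*} {IG : V → Prop} {IH : W → Prop}
    {a a' : V ⊕ {v : V // IG v}} {b b' : W ⊕ {w : W // IH w}}
    (ha : a.isRight = b.isRight) (ha' : a'.isRight = b'.isRight)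
    (hbase : bV IG a = bV IG a' ↔ bV IH b = bV IH b') :
    a = a' ↔ b = b' := by
  cases a <;> cases a' <;> cases b <;> cases b' <;> simp_all [bV, Subtype.ext_iff]

lemma kindAdj {V W : Type*} {G : SimpleGraph V} {H : SimpleGraph W}
    {IG : V → Prop} {IH : W → Prop}
    {a a' : V ⊕ {v : V // IG v}} {b b' : W ⊕ {w : W // IH w}}
    (ha : a.isRight = b.isRight) (ha' : a'.isRight = b'.isRight)
    (hbase : bV IG a = bV IG a' ↔ bV IH b = bV IH b')
    (hadj : G.Adj (bV IG a) (bV IG a') ↔ H.Adj (bV IH b) (bV IH b')) :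
    (attachLeaves G IG).Adj a a' ↔ (attachLeaves H IH).Adj b b' := by
  cases a <;> cases a' <;> cases b <;> cases b' <;>
    simp_all [bV, attach_adj_inl_inl, attach_adj_inl_inr, attach_adj_inr_inl,
      attach_adj_inr_inr]

lemma EF_attach_key {V W : Type*} {G : SimpleGraph V} {IG : V → Prop}
    {H : SimpleGraph W} {IH : W → Prop} :
    ∀ (k : ℕ) (l' : List ((V ⊕ {v : V // IG v}) × (W ⊕ {w : W // IH w}))),
      (∀ p ∈ l', (p : (V ⊕ {v : V // IG v}) × (W ⊕ {w : W // IH w})).1.isRight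
        = p.2.isRight) →
      EFDupWinsI G IG H IH k (l'.map (fun p => (bV IG p.1, bV IH p.2))) →
      EFDupWinsI (attachLeaves G IG) (fun _ => False) (attachLeaves H IH)
        (fun _ => False) k l' := by
  intro k
  induction k with
  | zero =>
    intro l' hkind h
    refine ⟨fun p _ => Iff.rfl, fun p hp q hq => ?_⟩
    have h2 := h.2 _ (List.mem_map_of_mem hp) _ (List.mem_map_of_mem hq)
    exact ⟨kindEq (hkind p hp) (hkind q hq) h2.1, kindAdj (hkind p hp) (hkind q hq) h2.1 h2.2⟩
  | succ k ih =>
    intro l' hkind h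
    constructor
    · intro a
      obtain ⟨b₀, hb₀⟩ := h.1 (bV IG a)
      cases a with
      | inl u =>
        refine ⟨inl b₀, ih ((inl u, inl b₀) :: l') ?_ hb₀⟩
        intro p hp
        rcases List.mem_cons.mp hp with rfl | hp
        · rfl
        · exact hkind p hp
      | inr v =>
        have hIH : IH b₀ := (hb₀.iso.1 _ (List.mem_cons_self)).1 v.2
        refine ⟨inr ⟨b₀, hIH⟩, ih ((inr v, inr ⟨b₀, hIH⟩) :: l') ?_ hb₀⟩
        intro p hp
        rcases List.mem_cons.mp hp with rfl | hp
        · rfl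
        · exact hkind p hp
    · intro b
      obtain ⟨a₀, ha₀⟩ := h.2 (bV IH b)
      cases b with
      | inl w =>
        refine ⟨inl a₀, ih ((inl a₀, inl w) :: l') ?_ ha₀⟩
        intro p hp
        rcases List.mem_cons.mp hp with rfl | hp
        · rfl
        · exact hkind p hp
      | inr v =>
        have hIG : IG a₀ := (ha₀.iso.1 _ (List.mem_cons_self)).2 v.2
        refine ⟨inr ⟨a₀, hIG⟩, ih ((inr ⟨a₀, hIG⟩, inr v) :: l') ?_ ha₀⟩
        intro p hp
        rcases List.mem_cons.mp hp with rfl | hp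
        · rfl
        · exact hkind p hp

/-- If Duplicator wins the `k`-round EF game on `(G, I_G)` and `(H, I_H)`, then
Duplicator wins the `k`-round EF game on the graphs `G_I`, `H_I` obtained by
attaching exactly one leaf to each vertex satisfying the unary predicate. -/
theorem firstOrderComplexity.EF_attachLeaves
    {V W : Type*} (G : SimpleGraph V) (IG : V → Prop)
    (H : SimpleGraph W) (IH : W → Prop) (k : ℕ)
    (h : EFDupWinsI G IG H IH k []) :
    EFDupWins (attachLeaves G IG) (attachLeaves H IH) k [] :=
  EF_attach_key k [] (fun p hp => absurd hp List.not_mem_nil) h
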